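/- arXiv:2204.11283 — 2 statements merged into one kernel-verified Lean document; each statement's English description precedes it below -/
import Mathlib

section
/- Let G be a connected graph on n vertices with radius r ≥ 3 and maximum vertex degree Δ. Then C̄_C(G) ≤ (n-1)/(2n-1-Δ + r(r-3)/2). -/
open Finset

section Aux

variable {V : Type*}

lemma exists_dist_pred' (G : SimpleGraph V) (hG : G.Connected) (v u : V) (m : ℕ)
    (h : G.dist v u = m + 1) : ∃ w, G.dist v w = m := by
  obtain ⟨p, hp⟩ := (hG v u).exists_walk_length_eq_dist
  have hne : u ≠ v := by rintro rfl; simp [SimpleGraph.dist_self] at h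
  obtain ⟨w, hadj, q, hpq⟩ := SimpleGraph.Walk.exists_eq_cons_of_ne hne p.reverse
  have hlen : q.length = m := by
    have := congrArg SimpleGraph.Walk.length hpq
    simp [SimpleGraph.Walk.length_reverse, hp, h] at this
    omega
  refine ⟨w, le_antisymm ?_ ?_⟩
  · have h1 : G.dist w v ≤ q.length := SimpleGraph.dist_le q
    rw [SimpleGraph.dist_comm]; omega
  · have h3 : G.dist w u ≤ 1 := by
      rw [SimpleGraph.dist_comm]
      exact le_of_eq (SimpleGraph.dist_eq_one_iff_adj.mpr hadj)
    have h4 := hG.dist_triangle (u := v) (v := w) (w := u)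
    omega

lemma exists_dist_eq' (G : SimpleGraph V) (hG : G.Connected) (v : V) :
    ∀ m : ℕ, (∃ u, G.dist v u = m) → ∀ k, k ≤ m → ∃ w, G.dist v w = k := by
  intro m
  induction m with
  | zero =>
      rintro _ k hk
      interval_cases k
      exact ⟨v, by simp⟩
  | succ m ih =>
      rintro ⟨u, hu⟩ k hk
      rcases Nat.lt_or_ge k (m + 1) with h | h
      · exact ih (exists_dist_pred' G hG v u m hu) k (by omega)
      · have : k = m + 1 := by omega
        exact ⟨u, this ▸ hu⟩

end Aux

/-- Gauss-type sum. -/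
lemma gauss_aux' : ∀ m : ℕ, 3 ≤ m →
    2 * (∑ k ∈ Icc 3 m, (m + 1 - k)) + 3 * m = m * m + 2 := by
  intro m hm
  induction m, hm using Nat.le_induction with
  | base => decide
  | succ m hm ih =>
      rw [Finset.sum_Icc_succ_top (by omega)]
      have h1 : ∀ k ∈ Icc 3 m, m + 1 + 1 - k = (m + 1 - k) + 1 := by
        intro k hk; simp only [mem_Icc] at hk; omega
      rw [Finset.sum_congr rfl h1, Finset.sum_add_distrib, Finset.sum_const,
        Nat.card_Icc, smul_eq_mul, mul_one]
      set S := ∑ k ∈ Icc 3 m, (m + 1 - k) with hS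
      have e1 : m + 1 - 3 = m - 2 := by omega
      have e2 : m + 1 + 1 - (m + 1) = 1 := by omega
      rw [e1, e2]
      obtain ⟨m', rfl⟩ : ∃ m', m = m' + 3 := ⟨m - 3, by omega⟩
      have e3 : m' + 3 - 2 = m' + 1 := by omega
      rw [e3]
      zify at ih ⊢
      linear_combination ih

/-- Radius/degree bound: `C̄_C(G) ≤ (n-1)/(2n-1-Δ + r(r-3)/2)` when `r ≥ 3`. -/
theorem closenessCentrality_le_of_radius_maxDegree
    {V : Type*} [Fintype V] [Nonempty V] [DecidableEq V]
    (G : SimpleGraph V) [DecidableRel G.Adj] (hG : G.Connected)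
    (r : ℕ)
    (hr : r = Finset.univ.inf' Finset.univ_nonempty
      (fun v => Finset.univ.sup (fun u => G.dist v u)))
    (hr3 : 3 ≤ r)
    (Δ : ℕ) (hΔ : Δ = Finset.univ.sup (fun v => G.degree v)) :
    (1 / (Fintype.card V : ℝ)) *
        ∑ v : V, ((Fintype.card V : ℝ) - 1) / ∑ w : V, (G.dist v w : ℝ) ≤
      ((Fintype.card V : ℝ) - 1) /
        (2 * (Fintype.card V : ℝ) - 1 - (Δ : ℝ) + (r : ℝ) * ((r : ℝ) - 3) / 2) := by
  classical
  set n := Fintype.card V with hn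
  have hn1 : 1 ≤ n := Fintype.card_pos
  have hΔn : Δ + 1 ≤ n := by
    have hd : ∀ v : V, G.degree v < n := fun v => G.degree_lt_card_verts v
    have hsup : Finset.univ.sup (fun v => G.degree v) < n :=
      Finset.sup_lt_iff (show (⊥ : ℕ) < n by show 0 < n; omega) |>.mpr fun b _ => hd b
    omega
  set D : ℝ := 2 * (n : ℝ) - 1 - (Δ : ℝ) + (r : ℝ) * ((r : ℝ) - 3) / 2 with hD
  have hDpos : 0 < D := by
    have h1 : (Δ : ℝ) + 1 ≤ (n : ℝ) := by exact_mod_cast hΔn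
    have h2 : (3 : ℝ) ≤ (r : ℝ) := by exact_mod_cast hr3
    have h3 : (0:ℝ) ≤ (r : ℝ) * ((r : ℝ) - 3) := mul_nonneg (by positivity) (by linarith)
    rw [hD]; nlinarith
  -- key transmission bound
  have key : ∀ v : V, D ≤ ∑ w : V, (G.dist v w : ℝ) := by
    intro v
    have hrv : r ≤ Finset.univ.sup (fun u => G.dist v u) := by
      rw [hr]; exact Finset.inf'_le _ (mem_univ v)
    obtain ⟨u0, _, hu0⟩ := Finset.exists_mem_eq_sup Finset.univ univ_nonempty
      (fun u => G.dist v u)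
    have hwit : ∀ k, k ≤ r → ∃ w, G.dist v w = k := fun k hk =>
      exists_dist_eq' G hG v (G.dist v u0) ⟨u0, rfl⟩ k
        (le_trans hk (le_trans hrv (le_of_eq hu0)))
    -- choice function
    set g : ℕ → V := fun j => if h : j ≤ r then (hwit j h).choose else v with hg
    have hgd : ∀ j, j ≤ r → G.dist v (g j) = j := by
      intro j hj
      simp only [hg, dif_pos hj]
      exact (hwit j hj).choose_spec
    -- layer cake
    have hlayer : ∑ k ∈ Icc 1 r, (univ.filter fun w => k ≤ G.dist v w).card
        ≤ ∑ w : V, G.dist v w := by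
      calc ∑ k ∈ Icc 1 r, (univ.filter fun w => k ≤ G.dist v w).card
          = ∑ k ∈ Icc 1 r, ∑ w : V, (if k ≤ G.dist v w then 1 else 0) := by
            refine Finset.sum_congr rfl fun k _ => ?_
            rw [Finset.card_filter]
        _ = ∑ w : V, ∑ k ∈ Icc 1 r, (if k ≤ G.dist v w then 1 else 0) :=
            Finset.sum_comm
        _ ≤ ∑ w : V, G.dist v w := by
            refine Finset.sum_le_sum fun w _ => ?_
            rw [← Finset.card_filter]
            calc ((Icc 1 r).filter fun k => k ≤ G.dist v w).card
                ≤ (Icc 1 (G.dist v w)).card := by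
                  refine Finset.card_le_card fun k hk => ?_
                  simp only [mem_filter, mem_Icc] at hk ⊢
                  omega
              _ = G.dist v w := by rw [Nat.card_Icc]; omega
    -- cardinality bounds
    have c1 : n ≤ (univ.filter fun w => 1 ≤ G.dist v w).card + 1 := by
      have hsub : univ.erase v ⊆ univ.filter fun w => 1 ≤ G.dist v w := by
        intro w hw
        rw [Finset.mem_erase] at hw
        simp only [mem_filter, mem_univ, true_and]
        have : G.dist v w ≠ 0 := by
          rw [SimpleGraph.dist_ne_zero_iff_ne_and_reachable]
          exact ⟨(hw.1).symm, hG v w⟩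
        omega
      have := Finset.card_le_card hsub
      rw [Finset.card_erase_of_mem (mem_univ v), Finset.card_univ] at this
      omega
    have c2 : n ≤ (univ.filter fun w => 2 ≤ G.dist v w).card + 1 + Δ := by
      have hsub : (univ.filter fun w => ¬ 2 ≤ G.dist v w)
          ⊆ insert v (G.neighborFinset v) := by
        intro w hw
        simp only [mem_filter, mem_univ, true_and, not_le] at hw
        interval_cases h : G.dist v w
        · have : v = w := (hG.dist_eq_zero_iff).mp h
          simp [this.symm]
        · have : G.Adj v w := SimpleGraph.dist_eq_one_iff_adj.mp h
          simp [SimpleGraph.mem_neighborFinset, this]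
      have h1 := Finset.card_le_card hsub
      have h2 : (insert v (G.neighborFinset v)).card ≤ G.degree v + 1 := by
        have := Finset.card_insert_le v (G.neighborFinset v)
        rwa [G.card_neighborFinset_eq_degree v] at this
      have h3 : G.degree v ≤ Δ := by rw [hΔ]; exact Finset.le_sup (f := fun v => G.degree v) (mem_univ v)
      have h4 := Finset.card_filter_add_card_filter_not
        (s := univ) (p := fun w => 2 ≤ G.dist v w)
      rw [Finset.card_univ] at h4
      omega
    have c3 : ∀ k ∈ Icc 3 r, r + 1 - k ≤ (univ.filter fun w => k ≤ G.dist v w).card := by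
      intro k hk
      rw [mem_Icc] at hk
      have hcard : (Icc k r).card ≤ (univ.filter fun w => k ≤ G.dist v w).card := by
        apply Finset.card_le_card_of_injOn g
        · intro j hj
          rw [Finset.mem_coe, mem_Icc] at hj
          simp only [Finset.mem_coe, mem_filter, mem_univ, true_and]
          rw [hgd j hj.2]; exact hj.1
        · intro a ha b hb hab
          rw [Finset.mem_coe, mem_Icc] at ha hb
          have h1 := hgd a ha.2
          have h2 := hgd b hb.2
          rw [hab] at h1; omega
      rwa [Nat.card_Icc] at hcard
    -- combine in ℕ
    set S : ℕ := ∑ k ∈ Icc 3 r, (r + 1 - k) with hSdef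
    have hS3 : S ≤ ∑ k ∈ Icc 3 r, (univ.filter fun w => k ≤ G.dist v w).card :=
      Finset.sum_le_sum c3
    have hsplit : ∑ k ∈ Icc 1 r, (univ.filter fun w => k ≤ G.dist v w).card
        = (univ.filter fun w => 1 ≤ G.dist v w).card
          + ((univ.filter fun w => 2 ≤ G.dist v w).card
            + ∑ k ∈ Icc 3 r, (univ.filter fun w => k ≤ G.dist v w).card) := by
      have hIcc : Icc 1 r = insert 1 (insert 2 (Icc 3 r)) := by
        ext k; simp only [mem_Icc, mem_insert]; omega
      rw [hIcc, Finset.sum_insert (by simp only [mem_insert, mem_Icc]; omega),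
        Finset.sum_insert (by simp only [mem_Icc]; omega)]
    have F1 : n + ((univ.filter fun w => 2 ≤ G.dist v w).card + S)
        ≤ 1 + ∑ w : V, G.dist v w := by omega
    have F3 : 2 * S + 3 * r = r * r + 2 := gauss_aux' r hr3
    -- cast to ℝ
    have F1R : (n : ℝ) + (((univ.filter fun w => 2 ≤ G.dist v w).card : ℝ) + (S : ℝ))
        ≤ 1 + ∑ w : V, (G.dist v w : ℝ) := by
      have := (Nat.cast_le (α := ℝ)).mpr F1
      push_cast at this
      convert this using 2
    have c2R : (n : ℝ) ≤ ((univ.filter fun w => 2 ≤ G.dist v w).card : ℝ) + 1 + (Δ : ℝ) := by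
      exact_mod_cast c2
    have F3R : 2 * (S : ℝ) + 3 * (r : ℝ) = (r : ℝ) * (r : ℝ) + 2 := by exact_mod_cast F3
    rw [hD]
    nlinarith [F1R, c2R, F3R]
  -- final assembly
  have hsum : ∑ v : V, ((n : ℝ) - 1) / ∑ w : V, (G.dist v w : ℝ)
      ≤ ∑ _v : V, ((n : ℝ) - 1) / D := by
    refine Finset.sum_le_sum fun v _ => ?_
    have hnn : (0:ℝ) ≤ (n : ℝ) - 1 := by
      have : (1:ℝ) ≤ (n:ℝ) := by exact_mod_cast hn1
      linarith
    exact div_le_div_of_nonneg_left hnn hDpos (key v)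
  have hnR : (0:ℝ) < (n : ℝ) := by exact_mod_cast hn1
  calc (1 / (n : ℝ)) * ∑ v : V, ((n : ℝ) - 1) / ∑ w : V, (G.dist v w : ℝ)
      ≤ (1 / (n : ℝ)) * ∑ _v : V, ((n : ℝ) - 1) / D := by
        apply mul_le_mul_of_nonneg_left hsum (by positivity)
    _ = ((n : ℝ) - 1) / D := by
        rw [Finset.sum_const, Finset.card_univ, nsmul_eq_mul, ← hn]
        field_simp
end

section
/- The closeness centrality of the path graph satisfies lim_{n→∞} n·C̄_C(P_n) = π. -/
open Finset Filter

section Aux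
open SimpleGraph Real

lemma walk_length_ge {n : ℕ} {u v : Fin n} (p : (pathGraph n).Walk u v) :
    Nat.dist u.val v.val ≤ p.length := by
  induction p with
  | nil => simp [Nat.dist_self]
  | cons h p ih =>
    rename_i a b c
    have hab : Nat.dist a.val b.val = 1 := by
      rcases (pathGraph_adj).mp h with h1 | h1 <;> simp [Nat.dist] <;> omega
    calc Nat.dist a.val c.val ≤ Nat.dist a.val b.val + Nat.dist b.val c.val :=
          Nat.dist.triangle_inequality _ _ _
      _ ≤ 1 + p.length := by omega
      _ = (SimpleGraph.Walk.cons h p).length := by simp [SimpleGraph.Walk.length_cons]; omega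

lemma walk_exists {n : ℕ} (d : ℕ) : ∀ (i j : Fin n), i.val + d = j.val →
    ∃ p : (pathGraph n).Walk i j, p.length = d := by
  induction d with
  | zero => intro i j h; have : i = j := Fin.ext (by omega); subst this; exact ⟨.nil, rfl⟩
  | succ d ih =>
    intro i j h
    have hlt : i.val + 1 < n := by omega
    let i' : Fin n := ⟨i.val + 1, by omega⟩
    have hadj : (pathGraph n).Adj i i' := pathGraph_adj.mpr (Or.inl rfl)
    obtain ⟨p, hp⟩ := ih i' j (by simp [i']; omega)
    exact ⟨.cons hadj p, by simp [hp]⟩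

lemma pathGraph_dist {n : ℕ} (i j : Fin n) :
    (pathGraph n).dist i j = Nat.dist i.val j.val := by
  rcases le_total i.val j.val with h | h
  · have ⟨p, hp⟩ := walk_exists (j.val - i.val) i j (by omega)
    have h1 := SimpleGraph.dist_le p
    have ⟨q, hq⟩ := (pathGraph_preconnected n i j).exists_walk_length_eq_dist
    have h2 := walk_length_ge q
    have : Nat.dist i.val j.val = j.val - i.val := Nat.dist_eq_sub_of_le h
    omega
  · have ⟨p, hp⟩ := walk_exists (i.val - j.val) j i (by omega)
    have h1 := SimpleGraph.dist_le p
    have ⟨q, hq⟩ := (pathGraph_preconnected n i j).exists_walk_length_eq_dist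
    have h2 := walk_length_ge q
    have h3 : Nat.dist i.val j.val = i.val - j.val := Nat.dist_eq_sub_of_le_right h
    have hc : (pathGraph n).dist i j = (pathGraph n).dist j i := SimpleGraph.dist_comm
    omega

lemma sum_dist_base (k : ℕ) : 2 * ∑ w ∈ range k, Nat.dist k w = k * (k + 1) := by
  have h1 : ∑ w ∈ range k, Nat.dist k w = ∑ w ∈ range k, (w + 1) := by
    rw [← Finset.sum_range_reflect (fun w => Nat.dist k w) k]
    apply Finset.sum_congr rfl
    intro j hj
    simp only [Finset.mem_range] at hj
    rw [Nat.dist_eq_sub_of_le_right (by omega)]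
    omega
  have h2 := Finset.sum_range_id_mul_two k
  rw [h1, Finset.sum_add_distrib, Finset.sum_const, card_range]
  cases k with
  | zero => rfl
  | succ m =>
    have h3 : m + 1 - 1 = m := rfl
    rw [h3] at h2
    simp only [smul_eq_mul, mul_one]
    nlinarith [h2]

lemma sum_dist_nat (k m : ℕ) :
    2 * ∑ w ∈ range (k + m), Nat.dist k w = k * (k + 1) + (m - 1) * m := by
  induction m with
  | zero => simpa using sum_dist_base k
  | succ m ih =>
    rw [show k + (m+1) = (k+m)+1 by ring, Finset.sum_range_succ, Nat.mul_add,
      ih, Nat.dist_eq_sub_of_le (by omega)]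
    have h2 : k + m - k = m := by omega
    rw [h2]
    cases m with
    | zero => simp
    | succ p =>
      have h3 : p + 1 - 1 = p := rfl
      have h4 : p + 1 + 1 - 1 = p + 1 := rfl
      rw [h3, h4]
      ring


lemma sum_dist_real {n : ℕ} (v : Fin n) :
    ∑ w : Fin n, (((pathGraph n).dist v w : ℕ) : ℝ)
      = ((v : ℝ) - ((n : ℝ) - 1) / 2) ^ 2 + ((n : ℝ) ^ 2 - 1) / 4 := by
  have hv : (v : ℕ) < n := v.isLt
  set k := (v : ℕ) with hk
  have hmain := sum_dist_nat k (n - k)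
  have hkm : k + (n - k) = n := by omega
  rw [hkm] at hmain
  have hsum : ∑ w : Fin n, (((pathGraph n).dist v w : ℕ) : ℝ)
      = ((∑ w ∈ range n, Nat.dist k w : ℕ) : ℝ) := by
    push_cast
    rw [← Fin.sum_univ_eq_sum_range (fun i => (Nat.dist k i : ℝ)) n]
    exact Finset.sum_congr rfl fun w _ => by rw [pathGraph_dist]
  rw [hsum]
  push_cast
  have hcast := congrArg (fun x : ℕ => (x : ℝ)) hmain
  simp only [Nat.cast_mul, Nat.cast_add, Nat.cast_ofNat] at hcast
  rw [Nat.cast_sub (by omega : 1 ≤ n - k), Nat.cast_sub (by omega : k ≤ n)] at hcast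
  push_cast at hcast
  have hkR : (k : ℝ) ≤ (n : ℝ) := by exact_mod_cast hv.le
  linear_combination hcast / 2

noncomputable def cc (n : ℕ) : ℝ := ((n : ℝ) - 1) / 2
noncomputable def rr2 (n : ℕ) : ℝ := ((n : ℝ) ^ 2 - 1) / 4
noncomputable def rr (n : ℕ) : ℝ := Real.sqrt (rr2 n)
noncomputable def ff (n : ℕ) (x : ℝ) : ℝ := ((n : ℝ) - 1) / ((x - cc n) ^ 2 + rr2 n)

lemma rr2_pos {n : ℕ} (hn : 2 ≤ n) : 0 < rr2 n := by
  have : (2 : ℝ) ≤ (n : ℝ) := by exact_mod_cast hn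
  unfold rr2; nlinarith

lemma rr_pos {n : ℕ} (hn : 2 ≤ n) : 0 < rr n := Real.sqrt_pos.mpr (rr2_pos hn)

lemma rr_sq {n : ℕ} (hn : 2 ≤ n) : rr n ^ 2 = rr2 n := Real.sq_sqrt (rr2_pos hn).le

lemma denom_pos {n : ℕ} (hn : 2 ≤ n) (x : ℝ) : 0 < (x - cc n) ^ 2 + rr2 n := by
  have := rr2_pos hn; positivity

lemma ff_cont {n : ℕ} (hn : 2 ≤ n) : Continuous (ff n) := by
  apply continuous_const.div
  · continuity
  · exact fun x => (denom_pos hn x).ne'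

lemma ff_integral {n : ℕ} (hn : 2 ≤ n) :
    ∫ x in (0:ℝ)..(n:ℝ), ff n x = ((n : ℝ) - 1) / rr n * (π / 2) := by
  have hr := rr_pos hn
  have hr2 := rr2_pos hn
  have hnR : (2 : ℝ) ≤ (n : ℝ) := by exact_mod_cast hn
  set F : ℝ → ℝ := fun x => ((n : ℝ) - 1) / rr n * Real.arctan ((x - cc n) / rr n) with hF
  have hderiv : ∀ x ∈ Set.uIcc (0:ℝ) (n:ℝ), HasDerivAt F (ff n x) x := by
    intro x _
    have h1 : HasDerivAt (fun x : ℝ => (x - cc n) / rr n) (1 / rr n) x := by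
      simpa using ((hasDerivAt_id x).sub_const (cc n)).div_const (rr n)
    have h2 := (Real.hasDerivAt_arctan ((x - cc n) / rr n)).comp x h1
    have h3 := h2.const_mul (((n : ℝ) - 1) / rr n)
    refine h3.congr_deriv ?_
    have hd := denom_pos hn x
    have hrs := rr_sq hn
    unfold ff
    field_simp
    rw [← hrs]
    ring
  have hint : IntervalIntegrable (ff n) MeasureTheory.volume 0 (n:ℝ) :=
    (ff_cont hn).intervalIntegrable _ _
  rw [intervalIntegral.integral_eq_sub_of_hasDerivAt hderiv hint]
  have hc0 : ((n:ℝ) - cc n) / rr n = (((n:ℝ) + 1) / 2) / rr n := by unfold cc; ring_nf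
  have hc1 : ((0:ℝ) - cc n) / rr n = -((((n:ℝ) - 1) / 2) / rr n) := by unfold cc; ring
  have ha : (0:ℝ) < (((n:ℝ) + 1) / 2) / rr n := by positivity
  have hinv : ((((n:ℝ) - 1) / 2) / rr n) = ((((n:ℝ) + 1) / 2) / rr n)⁻¹ := by
    have hrs := rr_sq hn
    have hmul : ((((n:ℝ) + 1) / 2) / rr n) * ((((n:ℝ) - 1) / 2) / rr n) = 1 := by
      have hrs2 : rr2 n = ((n:ℝ)^2-1)/4 := rfl
      field_simp
      nlinarith [hrs, hrs2]
    exact eq_inv_of_mul_eq_one_right hmul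
  simp only [hF]
  rw [hc0, hc1, Real.arctan_neg, hinv, Real.arctan_inv_of_pos ha]
  ring

lemma ff_diff_bound {n : ℕ} (hn : 2 ≤ n) {k : ℕ} (hk : k < n) {x : ℝ}
    (hx : x ∈ Set.uIoc ((k:ℝ)) ((k:ℝ)+1)) :
    |ff n x - ff n (k:ℝ)| ≤ 2 * ((n:ℝ)-1) * n / (rr2 n)^2 := by
  have hr2 := rr2_pos hn
  have hnR : (2:ℝ) ≤ (n:ℝ) := by exact_mod_cast hn
  have hkR : (k:ℝ) ≤ (n:ℝ) - 1 := by
    have : (k:ℝ) + 1 ≤ (n:ℝ) := by exact_mod_cast hk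
    linarith
  rw [Set.uIoc_of_le (by linarith : (k:ℝ) ≤ (k:ℝ)+1)] at hx
  obtain ⟨hx1, hx2⟩ := hx
  have hk0 : (0:ℝ) ≤ (k:ℝ) := Nat.cast_nonneg k
  set Dk : ℝ := ((k:ℝ) - cc n)^2 + rr2 n with hDk
  set Dx : ℝ := (x - cc n)^2 + rr2 n with hDx
  have hDkp : rr2 n ≤ Dk := by nlinarith [sq_nonneg ((k:ℝ) - cc n)]
  have hDxp : rr2 n ≤ Dx := by nlinarith [sq_nonneg (x - cc n)]
  have key : ff n x - ff n (k:ℝ) = (((n:ℝ)-1) * (Dk - Dx)) / (Dx * Dk) := by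
    unfold ff
    rw [div_sub_div _ _ (by nlinarith) (by nlinarith)]
    rw [hDk, hDx]
    ring_nf
  have hcc : cc n = ((n:ℝ)-1)/2 := rfl
  have habs : |Dk - Dx| ≤ 2 * (n:ℝ) := by
    have hfac : Dk - Dx = ((k:ℝ) - x) * ((k:ℝ) + x - 2 * cc n) := by rw [hDk, hDx]; ring
    rw [hfac, abs_mul]
    have h1 : |(k:ℝ) - x| ≤ 1 := abs_le.mpr ⟨by linarith, by linarith⟩
    have h2 : |(k:ℝ) + x - 2 * cc n| ≤ 2 * (n:ℝ) := by
      rw [hcc]; apply abs_le.mpr; constructor <;> [linarith; linarith]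
    calc |(k:ℝ) - x| * |(k:ℝ) + x - 2 * cc n| ≤ 1 * (2 * (n:ℝ)) := by
          apply mul_le_mul h1 h2 (abs_nonneg _) zero_le_one
      _ = 2 * (n:ℝ) := by ring
  rw [key, abs_div, abs_mul, abs_of_nonneg (by linarith : (0:ℝ) ≤ (n:ℝ)-1),
    abs_of_pos (by nlinarith : (0:ℝ) < Dx * Dk)]
  have hnum : ((n:ℝ)-1) * |Dk - Dx| ≤ 2 * ((n:ℝ)-1) * n := by nlinarith [abs_nonneg (Dk - Dx)]
  apply div_le_div₀ (by nlinarith) hnum (by positivity) (by nlinarith)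

lemma interval_err {n : ℕ} (hn : 2 ≤ n) {k : ℕ} (hk : k < n) :
    |(∫ x in (k:ℝ)..((k:ℝ)+1), ff n x) - ff n (k:ℝ)| ≤ 2 * ((n:ℝ)-1) * n / (rr2 n)^2 := by
  have hconst : ff n (k:ℝ) = ∫ x in (k:ℝ)..((k:ℝ)+1), ff n (k:ℝ) := by simp
  rw [hconst, ← intervalIntegral.integral_sub ((ff_cont hn).intervalIntegrable _ _)
    (intervalIntegrable_const)]
  have hb := intervalIntegral.norm_integral_le_of_norm_le_const
    (C := 2 * ((n:ℝ)-1) * n / (rr2 n)^2) (f := fun x => ff n x - ff n (k:ℝ))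
    (a := (k:ℝ)) (b := (k:ℝ)+1)
    (fun x hx => by rw [Real.norm_eq_abs]; exact ff_diff_bound hn hk hx)
  rw [Real.norm_eq_abs] at hb
  simpa using hb

lemma sum_err {n : ℕ} (hn : 2 ≤ n) :
    |(∑ k ∈ range n, ff n (k:ℝ)) - ∫ x in (0:ℝ)..(n:ℝ), ff n x|
      ≤ n * (2 * ((n:ℝ)-1) * n / (rr2 n)^2) := by
  have hsplit := intervalIntegral.sum_integral_adjacent_intervals
    (a := fun i : ℕ => (i:ℝ)) (n := n) (μ := MeasureTheory.volume) (f := ff n)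
    (fun k _ => (ff_cont hn).intervalIntegrable _ _)
  simp only [Nat.cast_zero] at hsplit
  rw [← hsplit, ← Finset.sum_sub_distrib]
  refine (Finset.abs_sum_le_sum_abs _ _).trans ?_
  have hbd : ∀ k ∈ range n, |ff n (k:ℝ) - ∫ x in ((k:ℕ):ℝ)..(((k+1:ℕ)):ℝ), ff n x|
      ≤ 2 * ((n:ℝ)-1) * n / (rr2 n)^2 := by
    intro k hk
    rw [abs_sub_comm]
    have : (((k+1:ℕ)):ℝ) = (k:ℝ) + 1 := by push_cast; ring
    rw [this]
    exact interval_err hn (Finset.mem_range.mp hk)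
  calc ∑ k ∈ range n, |ff n (k:ℝ) - ∫ x in ((k:ℕ):ℝ)..(((k+1:ℕ)):ℝ), ff n x|
      ≤ ∑ _k ∈ range n, 2 * ((n:ℝ)-1) * n / (rr2 n)^2 := Finset.sum_le_sum hbd
    _ = n * (2 * ((n:ℝ)-1) * n / (rr2 n)^2) := by
        rw [Finset.sum_const, card_range]; ring

lemma I_tendsto : Tendsto (fun n : ℕ => ((n:ℝ)-1)/rr n * (π/2)) atTop (nhds π) := by
  have hg : Tendsto (fun n : ℕ => 4*((n:ℝ)-1)/((n:ℝ)+1)) atTop (nhds 4) := by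
    have h0 : Tendsto (fun n : ℕ => 8/((n:ℝ)+1)) atTop (nhds 0) := by
      have := (tendsto_const_div_atTop_nhds_zero_nat (8:ℝ)).comp (tendsto_add_atTop_nat 1)
      refine this.congr fun n => ?_
      show (8:ℝ)/(((n+1:ℕ)):ℝ) = 8/((n:ℝ)+1)
      push_cast
      ring
    have := tendsto_const_nhds (x := (4:ℝ)) (f := atTop (α := ℕ)) |>.sub h0
    rw [sub_zero] at this
    refine this.congr fun n => ?_
    have hpos : (0:ℝ) < (n:ℝ)+1 := by positivity
    field_simp
    ring
  have hsq : Tendsto (fun n : ℕ => Real.sqrt (4*((n:ℝ)-1)/((n:ℝ)+1)) * (π/2)) atTop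
      (nhds π) := by
    have h2 : Tendsto (fun n : ℕ => Real.sqrt (4*((n:ℝ)-1)/((n:ℝ)+1))) atTop (nhds 2) := by
      have h4 : Real.sqrt 4 = 2 := by
        rw [show (4:ℝ) = 2^2 by norm_num, Real.sqrt_sq (by norm_num : (0:ℝ) ≤ 2)]
      simpa [h4, Function.comp_def] using (Real.continuous_sqrt.tendsto 4).comp hg
    have := h2.mul_const (π/2)
    have hpi : (2:ℝ) * (π/2) = π := by ring
    rw [hpi] at this
    exact this
  refine hsq.congr' ?_
  filter_upwards [eventually_ge_atTop 2] with n hn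
  have hnR : (2:ℝ) ≤ (n:ℝ) := by exact_mod_cast hn
  have hr2 := rr2_pos hn
  have hrr : rr n = Real.sqrt (rr2 n) := rfl
  have hr2' : rr2 n = ((n:ℝ)^2-1)/4 := rfl
  have hq : 4*((n:ℝ)-1)/((n:ℝ)+1) = ((n:ℝ)-1)^2 / rr2 n := by
    rw [hr2', div_eq_div_iff (by nlinarith) (by nlinarith)]
    ring
  have h1 : ((n:ℝ)-1)/rr n = Real.sqrt (4*((n:ℝ)-1)/((n:ℝ)+1)) := by
    rw [hq, Real.sqrt_div (sq_nonneg _), Real.sqrt_sq (by linarith : (0:ℝ) ≤ (n:ℝ)-1), hrr]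
  rw [h1]

lemma G_tendsto : Tendsto (fun n : ℕ => ∑ k ∈ range n, ff n (k:ℝ)) atTop (nhds π) := by
  have herr : Tendsto
      (fun n : ℕ => (∑ k ∈ range n, ff n (k:ℝ)) - ((n:ℝ)-1)/rr n * (π/2)) atTop (nhds 0) := by
    apply squeeze_zero_norm' (a := fun n : ℕ => 64/(n:ℝ))
    · filter_upwards [eventually_ge_atTop 2] with n hn
      have hnR : (2:ℝ) ≤ (n:ℝ) := by exact_mod_cast hn
      have hr2 := rr2_pos hn
      rw [Real.norm_eq_abs, ← ff_integral hn]
      refine (sum_err hn).trans ?_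
      have heq : (n:ℝ) * (2*((n:ℝ)-1)*(n:ℝ)/(rr2 n)^2) = 2*(n:ℝ)^2*((n:ℝ)-1)/(rr2 n)^2 := by
        ring
      rw [heq, div_le_div_iff₀ (by positivity) (by linarith)]
      have hr2' : rr2 n = ((n:ℝ)^2-1)/4 := rfl
      rw [hr2']
      nlinarith [sq_nonneg ((n:ℝ)-2), sq_nonneg ((n:ℝ)^2-1)]
    · exact tendsto_const_div_atTop_nhds_zero_nat (64:ℝ)
  have := I_tendsto.add herr
  rw [add_zero] at this
  refine this.congr fun n => ?_
  ring


lemma main_sum_eq {n : ℕ} (hn : 1 ≤ n) :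
    (n : ℝ) * ((1 / (n : ℝ)) * ∑ v : Fin n, ((n : ℝ) - 1) /
        ∑ w : Fin n, ((SimpleGraph.pathGraph n).dist v w : ℝ))
      = ∑ k ∈ range n, ff n (k:ℝ) := by
  have hn0 : (n:ℝ) ≠ 0 := by positivity
  rw [← mul_assoc, mul_one_div, div_self hn0, one_mul]
  rw [← Fin.sum_univ_eq_sum_range (fun i : ℕ => ff n (i:ℝ)) n]
  refine Finset.sum_congr rfl fun v _ => ?_
  rw [sum_dist_real v]
  rfl

end Aux

/-- `lim_{n→∞} n · C̄_C(P_n) = π`. -/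
theorem tendsto_mul_closenessCentrality_pathGraph :
    Tendsto
      (fun n : ℕ =>
        (n : ℝ) *
          ((1 / (n : ℝ)) *
            ∑ v : Fin n,
              ((n : ℝ) - 1) /
                ∑ w : Fin n, ((SimpleGraph.pathGraph n).dist v w : ℝ)))
      atTop (nhds Real.pi) := by
  refine G_tendsto.congr' ?_
  filter_upwards [eventually_ge_atTop 1] with n hn
  exact (main_sum_eq hn).symm
end
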